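/- For every x on the unit sphere S^{n-1} in R^n, x_n^2 = (Γ((n+1)/2) / (2 π^{(n-1)/2})) · ∫_{S^{n-1}} |⟨x,ξ⟩| · ( (n+1) ξ_n^2 − 1 ) dξ. -/

import Mathlib

open MeasureTheory Real Finset
open scoped RealInnerProductSpace

section auxiliary
open Set


lemma odd_int_zero {f : ℝ → ℝ} (h : ∀ x, f (-x) = - f x) : ∫ x : ℝ, f x = 0 := by
  have h1 : ∫ x : ℝ, f (-x) = ∫ x : ℝ, f x := integral_neg_eq_self f volume
  have h2 : ∫ x : ℝ, f (-x) = - ∫ x : ℝ, f x := by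
    rw [show (fun x : ℝ => f (-x)) = fun x => - f x from funext h, integral_neg]
  linarith

lemma gauss_Ioi (k : ℕ) :
    ∫ x in Ioi (0:ℝ), x ^ k * Real.exp (-x^2) = Real.Gamma (((k:ℝ)+1)/2) / 2 := by
  have h := integral_rpow_mul_exp_neg_rpow (p := 2) (q := (k:ℝ)) two_pos
    (by exact lt_of_lt_of_le (by norm_num) (Nat.cast_nonneg k))
  rw [show ∫ x in Ioi (0:ℝ), x ^ k * Real.exp (-x^2)
      = ∫ x in Ioi (0:ℝ), x ^ (k:ℝ) * Real.exp (-x^((2:ℕ):ℝ)) from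
    (setIntegral_congr_fun measurableSet_Ioi fun x _ => by
      rw [Real.rpow_natCast, Real.rpow_natCast]).symm]
  push_cast at h ⊢
  rw [h]; ring

lemma g0 : ∫ u : ℝ, Real.exp (-u^2) = Real.sqrt π := by
  simpa using integral_gaussian 1

lemma v_abs0 : ∫ u : ℝ, |u| * Real.exp (-u^2) = 1 := by
  have : (fun u : ℝ => |u| * Real.exp (-u^2))
      = fun u : ℝ => (fun t : ℝ => t * Real.exp (-t^2)) |u| := by
    funext u; simp [sq_abs]
  rw [this, integral_comp_abs (f := fun t : ℝ => t * Real.exp (-t^2))]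
  have h := gauss_Ioi 1
  simp only [pow_one] at h
  rw [h]
  norm_num [Real.Gamma_one]

lemma v_abs2 : ∫ u : ℝ, |u| * (u^2 * Real.exp (-u^2)) = 1 := by
  have : (fun u : ℝ => |u| * (u^2 * Real.exp (-u^2)))
      = fun u : ℝ => (fun t : ℝ => t^3 * Real.exp (-t^2)) |u| := by
    funext u; simp only [sq_abs]
    rw [show |u|^3 = |u| * |u|^2 by ring, sq_abs]; ring
  rw [this, integral_comp_abs (f := fun t : ℝ => t^3 * Real.exp (-t^2)), gauss_Ioi 3]
  norm_num [show ((3:ℕ):ℝ) + 1 = 2 * 2 by norm_num, show (2*2:ℝ)/2 = 2 by norm_num,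
    Real.Gamma_two]

lemma v_sq : ∫ u : ℝ, u^2 * Real.exp (-u^2) = Real.sqrt π / 2 := by
  have : (fun u : ℝ => u^2 * Real.exp (-u^2))
      = fun u : ℝ => (fun t : ℝ => t^2 * Real.exp (-t^2)) |u| := by
    funext u; simp [sq_abs]
  rw [this, integral_comp_abs (f := fun t : ℝ => t^2 * Real.exp (-t^2)), gauss_Ioi 2,
    show (((2:ℕ):ℝ)+1)/2 = 1/2 + 1 by norm_num, Real.Gamma_add_one (by norm_num),
    Real.Gamma_one_half_eq]
  ring

lemma v_odd1 : ∫ u : ℝ, u * Real.exp (-u^2) = 0 :=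
  odd_int_zero fun x => by rw [neg_sq]; ring

lemma v_odd_abs : ∫ u : ℝ, |u| * (u * Real.exp (-u^2)) = 0 :=
  odd_int_zero fun x => by rw [abs_neg, neg_sq]; ring

lemma int_pow_gauss (p : ℕ) : Integrable (fun u : ℝ => u ^ p * Real.exp (-u^2)) := by
  have h := integrable_rpow_mul_exp_neg_mul_sq (b := 1) one_pos
    (s := (p:ℝ)) (lt_of_lt_of_le (by norm_num) (Nat.cast_nonneg p))
  simpa [Real.rpow_natCast] using h

lemma int_abs_pow_gauss (p : ℕ) :
    Integrable (fun u : ℝ => |u| * (u ^ p * Real.exp (-u^2))) := by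
  refine (int_pow_gauss (p+1)).abs.mono' ?_ ?_
  · exact (continuous_abs.mul ((continuous_pow p).mul
      ((continuous_pow 2).neg.rexp))).aestronglyMeasurable
  · filter_upwards with u
    rw [Real.norm_eq_abs]
    refine le_of_eq ?_
    rw [abs_mul, abs_mul, abs_abs, abs_mul, abs_pow, abs_pow, Real.abs_exp, pow_succ]
    ring

noncomputable def psi {n : ℕ} (N i j k : Fin n) (u : ℝ) : ℝ :=
  (if k = N then |u| else 1) *
    (u ^ ((if k = i then 1 else 0) + (if k = j then 1 else 0)) * Real.exp (-u^2))

lemma psi_int {n : ℕ} (N i j k : Fin n) : Integrable (fun u => psi N i j k u) := by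
  rcases eq_or_ne k N with hk | hk
  · simp only [psi, if_pos hk]
    exact int_abs_pow_gauss _
  · simp only [psi, if_neg hk, one_mul]
    exact int_pow_gauss _

lemma psi_prod {n : ℕ} (N i j : Fin n) (w : Fin n → ℝ) :
    ∏ k, psi N i j k (w k) = |w N| * (w i * w j) * Real.exp (-∑ k, (w k)^2) := by
  simp only [psi]
  rw [Finset.prod_mul_distrib, Finset.prod_mul_distrib]
  have h1 : ∏ k, (if k = N then |w k| else 1) = |w N| := by
    rw [Finset.prod_ite_eq' Finset.univ N (fun k => |w k|), if_pos (Finset.mem_univ N)]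
  have h2 : ∏ k, w k ^ ((if k = i then 1 else 0) + (if k = j then 1 else 0)) = w i * w j := by
    simp only [pow_add]
    rw [Finset.prod_mul_distrib]
    have e1 : ∀ i' : Fin n, ∀ k, w k ^ (if k = i' then 1 else 0) = if k = i' then w k else 1 := by
      intro i' k; split <;> simp
    rw [Finset.prod_congr rfl (fun k _ => e1 i k), Finset.prod_congr rfl (fun k _ => e1 j k),
      Finset.prod_ite_eq' Finset.univ i w, Finset.prod_ite_eq' Finset.univ j w,
      if_pos (Finset.mem_univ i), if_pos (Finset.mem_univ j)]
  have h3 : ∏ k, Real.exp (-(w k)^2) = Real.exp (-∑ k, (w k)^2) := by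
    rw [← Real.exp_sum]
    congr 1
    simp
  rw [h1, h2, h3]; ring

lemma psi_val {n : ℕ} (N i j k : Fin n) :
    ∫ u : ℝ, psi N i j k u =
      if k = i then (if k = j then (if k = N then 1 else Real.sqrt π / 2) else 0)
      else if k = j then 0
      else if k = N then 1 else Real.sqrt π := by
  by_cases hi : k = i
  · subst hi
    by_cases hj : k = j
    · subst hj
      by_cases hN : k = N
      · subst hN
        simp only [psi, if_pos rfl, if_true, eq_self_iff_true]
        rw [show (1+1 : ℕ) = 2 from rfl]
        exact v_abs2
      · simp only [psi, if_pos rfl, if_true, eq_self_iff_true, if_neg hN, one_mul]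
        rw [show (1+1 : ℕ) = 2 from rfl]
        exact v_sq
    · by_cases hN : k = N
      · subst hN
        simp only [psi, if_pos rfl, if_true, eq_self_iff_true, if_neg hj]
        simp only [add_zero, zero_add, pow_one]
        exact v_odd_abs
      · simp only [psi, if_pos rfl, if_true, eq_self_iff_true, if_neg hj, if_neg hN, one_mul]
        simp only [add_zero, zero_add, pow_one]
        exact v_odd1
  · by_cases hj : k = j
    · subst hj
      by_cases hN : k = N
      · subst hN
        simp only [psi, if_pos rfl, if_true, eq_self_iff_true, if_neg hi]
        simp only [add_zero, zero_add, pow_one]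
        exact v_odd_abs
      · simp only [psi, if_pos rfl, if_true, eq_self_iff_true, if_neg hi, if_neg hN, one_mul]
        simp only [add_zero, zero_add, pow_one]
        exact v_odd1
    · by_cases hN : k = N
      · subst hN
        simp only [psi, if_pos rfl, if_true, eq_self_iff_true, if_neg hi, if_neg hj]
        simp only [add_zero, zero_add, pow_zero, one_mul]
        exact v_abs0
      · simp only [psi, if_neg hi, if_neg hj, if_neg hN, one_mul]
        simp only [add_zero, zero_add, pow_zero, one_mul]
        exact g0

lemma M_int {n : ℕ} (N i j : Fin n) :
    Integrable (fun w : Fin n → ℝ => ∏ k, psi N i j k (w k)) :=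
  Integrable.fintype_prod (fun k => psi_int N i j k)

lemma M_val {n : ℕ} (N i j : Fin n) :
    ∫ w : Fin n → ℝ, ∏ k, psi N i j k (w k)
      = if i = j then (if i = N then Real.sqrt π ^ (n-1) else Real.sqrt π ^ (n-1) / 2)
        else 0 := by
  rw [MeasureTheory.integral_fintype_prod_volume_eq_prod (fun k => psi N i j k)]
  rw [Finset.prod_congr rfl (fun k _ => psi_val N i j k)]
  by_cases hij : i = j
  · subst hij
    rw [if_pos rfl]
    by_cases hiN : i = N
    · subst hiN
      rw [if_pos rfl]
      rw [← Finset.mul_prod_erase Finset.univ _ (Finset.mem_univ i)]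
      rw [if_pos rfl, if_pos rfl, if_pos rfl, one_mul]
      rw [Finset.prod_congr rfl (fun k hk => by
        rw [if_neg (Finset.ne_of_mem_erase hk), if_neg (Finset.ne_of_mem_erase hk),
          if_neg (Finset.ne_of_mem_erase hk)])]
      rw [Finset.prod_const, Finset.card_erase_of_mem (Finset.mem_univ i),
        Finset.card_univ, Fintype.card_fin]
    · rw [if_neg hiN]
      have h2 : 2 ≤ n := by
        by_contra h
        push_neg at h
        exact hiN (Fin.ext (by omega))
      rw [← Finset.mul_prod_erase Finset.univ _ (Finset.mem_univ N)]
      have hNi : ¬(N = i) := fun h => hiN h.symm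
      rw [if_neg hNi, if_neg hNi, if_pos rfl]
      have hiE : i ∈ Finset.univ.erase N := Finset.mem_erase.2 ⟨hiN, Finset.mem_univ i⟩
      rw [← Finset.mul_prod_erase _ _ hiE]
      rw [if_pos rfl, if_pos rfl, if_neg hiN]
      rw [Finset.prod_congr rfl (fun k hk => by
        have hki : k ≠ i := Finset.ne_of_mem_erase hk
        have hkN : k ≠ N := Finset.ne_of_mem_erase (Finset.mem_of_mem_erase hk)
        rw [if_neg hki, if_neg hki, if_neg hkN])]
      rw [Finset.prod_const, Finset.card_erase_of_mem hiE,
        Finset.card_erase_of_mem (Finset.mem_univ N), Finset.card_univ, Fintype.card_fin]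
      rw [show n - 1 - 1 = n - 2 from by omega, one_mul,
        show n - 1 = (n-2) + 1 from by omega, pow_succ]
      ring
  · rw [if_neg hij]
    refine Finset.prod_eq_zero (Finset.mem_univ i) ?_
    rw [if_pos rfl, if_neg (fun h => hij h)]

lemma core {n : ℕ} (N : Fin n) (c : Fin n → ℝ) (hc : ∑ i, c i ^ 2 = 1) :
    ∫ w : Fin n → ℝ,
      |w N| * (((n:ℝ)+1) * (∑ i, c i * w i)^2 - ∑ i, (w i)^2) * Real.exp (-∑ i, (w i)^2)
      = ((n:ℝ)+1) * (c N)^2 / 2 * Real.sqrt π ^ (n-1) := by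
  have hdecomp : ∀ w : Fin n → ℝ,
      |w N| * (((n:ℝ)+1) * (∑ i, c i * w i)^2 - ∑ i, (w i)^2) * Real.exp (-∑ i, (w i)^2)
      = (∑ i, ∑ j, ((n:ℝ)+1) * (c i * c j) * (∏ k, psi N i j k (w k)))
        - ∑ i, ∏ k, psi N i i k (w k) := by
    intro w
    have h1 : ∑ i, ∑ j, ((n:ℝ)+1) * (c i * c j) * (∏ k, psi N i j k (w k))
        = ((n:ℝ)+1) * |w N| * Real.exp (-∑ k, (w k)^2) * (∑ i, c i * w i)^2 := by
      rw [sq, Finset.sum_mul_sum, Finset.mul_sum]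
      refine Finset.sum_congr rfl fun i _ => ?_
      rw [Finset.mul_sum]
      refine Finset.sum_congr rfl fun j _ => ?_
      rw [psi_prod]
      ring
    have h2 : ∑ i, ∏ k, psi N i i k (w k)
        = |w N| * Real.exp (-∑ k, (w k)^2) * ∑ i, (w i)^2 := by
      rw [Finset.mul_sum]
      refine Finset.sum_congr rfl fun i _ => ?_
      rw [psi_prod]
      ring
    rw [h1, h2]
    ring
  rw [integral_congr_ae (Filter.Eventually.of_forall hdecomp)]
  have hint1 : ∀ i j : Fin n,
      Integrable (fun w : Fin n → ℝ => ((n:ℝ)+1) * (c i * c j) * ∏ k, psi N i j k (w k)) :=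
    fun i j => (M_int N i j).const_mul _
  rw [integral_sub
    (integrable_finset_sum _ fun i _ => integrable_finset_sum _ fun j _ => hint1 i j)
    (integrable_finset_sum _ fun i _ => M_int N i i)]
  rw [integral_finset_sum _ (fun i _ => integrable_finset_sum _ fun j _ => hint1 i j),
    integral_finset_sum _ (fun i _ => M_int N i i)]
  have hs1 : ∀ i : Fin n, ∫ w : Fin n → ℝ, ∑ j, ((n:ℝ)+1) * (c i * c j) * ∏ k, psi N i j k (w k)
      = ∑ j, ((n:ℝ)+1) * (c i * c j) * ∫ w : Fin n → ℝ, ∏ k, psi N i j k (w k) := by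
    intro i
    rw [integral_finset_sum _ (fun j _ => hint1 i j)]
    exact Finset.sum_congr rfl fun j _ => MeasureTheory.integral_const_mul _ _
  rw [Finset.sum_congr rfl fun i _ => hs1 i]
  simp only [M_val]
  set S := Real.sqrt π ^ (n-1) with hS
  have hsum1 : ∀ i : Fin n,
      ∑ j, ((n:ℝ)+1) * (c i * c j) * (if i = j then (if i = N then S else S / 2) else 0)
      = ((n:ℝ)+1) * (c i * c i) * (if i = N then S else S / 2) := by
    intro i
    rw [Finset.sum_eq_single i (fun j _ hji => by rw [if_neg (fun h => hji h.symm), mul_zero])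
      (fun h => absurd (Finset.mem_univ i) h)]
    rw [if_pos rfl]
  rw [Finset.sum_congr rfl fun i _ => hsum1 i]
  have hsum2 : ∑ i, ((n:ℝ)+1) * (c i * c i) * (if i = N then S else S / 2)
      = ((n:ℝ)+1) * (S/2) * (∑ i, c i ^ 2) + ((n:ℝ)+1) * (S/2) * (c N)^2 := by
    have : ∀ i : Fin n, ((n:ℝ)+1) * (c i * c i) * (if i = N then S else S / 2)
        = ((n:ℝ)+1) * (S/2) * (c i)^2 + (if i = N then ((n:ℝ)+1) * (S/2) * (c i)^2 else 0) := by
      intro i; split <;> ring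
    rw [Finset.sum_congr rfl fun i _ => this i, Finset.sum_add_distrib, ← Finset.mul_sum,
      Finset.sum_ite_eq' Finset.univ N (fun i => ((n:ℝ)+1) * (S/2) * (c i)^2),
      if_pos (Finset.mem_univ N)]
  have hsum3 : ∑ i : Fin n, (if i = N then S else S / 2) = n * (S/2) + S/2 := by
    have : ∀ i : Fin n, (if i = N then S else S / 2)
        = S/2 + (if i = N then S/2 else 0) := by
      intro i; split <;> ring
    rw [Finset.sum_congr rfl fun i _ => this i, Finset.sum_add_distrib, Finset.sum_const,
      Finset.sum_ite_eq' Finset.univ N (fun _ => S/2), if_pos (Finset.mem_univ N),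
      Finset.card_univ, Fintype.card_fin, nsmul_eq_mul]
  have hii : ∀ i : Fin n, (if i = i then (if i = N then S else S / 2) else 0)
      = (if i = N then S else S/2) := fun i => if_pos rfl
  rw [hsum2, hc]
  simp only [if_true]
  rw [hsum3]
  ring

lemma polar {n : ℕ} (hn : 1 ≤ n) (g : Metric.sphere (0 : EuclideanSpace ℝ (Fin n)) 1 → ℝ)
    (f : EuclideanSpace ℝ (Fin n) → ℝ)
    (hfg : ∀ (ξ : Metric.sphere (0 : EuclideanSpace ℝ (Fin n)) 1) (r : ℝ), 0 < r →
      f (r • (ξ : EuclideanSpace ℝ (Fin n))) = r^3 * Real.exp (-r^2) * g ξ) :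
    ∫ y, f y = (∫ ξ, g ξ ∂((volume : Measure (EuclideanSpace ℝ (Fin n))).toSphere))
      * (Real.Gamma (((n:ℝ)+3)/2) / 2) := by
  haveI : Nonempty (Fin n) := ⟨⟨0, hn⟩⟩
  haveI : Nontrivial (EuclideanSpace ℝ (Fin n)) := by
    refine ⟨0, EuclideanSpace.single ⟨0, hn⟩ (1:ℝ), fun h => ?_⟩
    have := congrArg (fun v : EuclideanSpace ℝ (Fin n) => v ⟨0, hn⟩) h.symm
    simp [EuclideanSpace.single_apply] at this
  have hdim : Module.finrank ℝ (EuclideanSpace ℝ (Fin n)) = n := finrank_euclideanSpace_fin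
  calc ∫ y, f y
      = ∫ y : ({0}ᶜ : Set (EuclideanSpace ℝ (Fin n))), f y ∂(volume.comap (Subtype.val)) := by
        rw [MeasureTheory.integral_subtype_comap (measurableSet_singleton (0:EuclideanSpace ℝ (Fin n))).compl f,
          MeasureTheory.restrict_compl_singleton]
    _ = ∫ y : ({0}ᶜ : Set (EuclideanSpace ℝ (Fin n))),
          (fun p : Metric.sphere (0:EuclideanSpace ℝ (Fin n)) 1 × Set.Ioi (0:ℝ) =>
            g p.1 * ((p.2:ℝ)^3 * Real.exp (-(p.2:ℝ)^2))) ((homeomorphUnitSphereProd (EuclideanSpace ℝ (Fin n))) y)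
          ∂(volume.comap (Subtype.val)) := by
        refine integral_congr_ae (Filter.Eventually.of_forall fun y => ?_)
        beta_reduce
        have hy : (y : EuclideanSpace ℝ (Fin n)) ≠ 0 := y.2
        have hr : (0:ℝ) < ‖(y : EuclideanSpace ℝ (Fin n))‖ := norm_pos_iff.2 hy
        have h1 := hfg ((homeomorphUnitSphereProd (EuclideanSpace ℝ (Fin n))) y).1 ‖(y : EuclideanSpace ℝ (Fin n))‖ hr
        rw [homeomorphUnitSphereProd_apply_fst_coe, smul_inv_smul₀ hr.ne'] at h1
        rw [h1, homeomorphUnitSphereProd_apply_snd_coe]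
        ring
    _ = ∫ p : Metric.sphere (0:EuclideanSpace ℝ (Fin n)) 1 × Set.Ioi (0:ℝ),
          g p.1 * ((p.2:ℝ)^3 * Real.exp (-(p.2:ℝ)^2))
          ∂((volume : Measure (EuclideanSpace ℝ (Fin n))).toSphere.prod
            (Measure.volumeIoiPow (Module.finrank ℝ (EuclideanSpace ℝ (Fin n)) - 1))) :=
        (volume : Measure (EuclideanSpace ℝ (Fin n))).measurePreserving_homeomorphUnitSphereProd.integral_comp
          (Homeomorph.measurableEmbedding _)
          (fun p : Metric.sphere (0:EuclideanSpace ℝ (Fin n)) 1 × Set.Ioi (0:ℝ) =>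
            g p.1 * ((p.2:ℝ)^3 * Real.exp (-(p.2:ℝ)^2)))
    _ = (∫ ξ, g ξ ∂((volume : Measure (EuclideanSpace ℝ (Fin n))).toSphere))
          * ∫ r : Set.Ioi (0:ℝ), (r:ℝ)^3 * Real.exp (-(r:ℝ)^2)
            ∂(Measure.volumeIoiPow (Module.finrank ℝ (EuclideanSpace ℝ (Fin n)) - 1)) :=
        MeasureTheory.integral_prod_mul g (fun r : Set.Ioi (0:ℝ) => (r:ℝ)^3 * Real.exp (-(r:ℝ)^2))
    _ = (∫ ξ, g ξ ∂((volume : Measure (EuclideanSpace ℝ (Fin n))).toSphere)) * (Real.Gamma (((n:ℝ)+3)/2) / 2) := by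
        congr 1
        rw [hdim]
        simp only [Measure.volumeIoiPow, ENNReal.ofReal]
        rw [integral_withDensity_eq_integral_smul
          ((measurable_subtype_coe.pow_const _).real_toNNReal)
          (fun r : Set.Ioi (0:ℝ) => (r:ℝ)^3 * Real.exp (-(r:ℝ)^2))]
        rw [MeasureTheory.integral_subtype_comap measurableSet_Ioi
          (fun a : ℝ => Real.toNNReal (a^(n-1)) • (a^3 * Real.exp (-a^2)))]
        rw [setIntegral_congr_fun measurableSet_Ioi (g := fun a : ℝ => a^(n+2) * Real.exp (-a^2))
          (fun r hr => by
            beta_reduce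
            rw [NNReal.smul_def, Real.coe_toNNReal _ (pow_nonneg (le_of_lt hr) _), smul_eq_mul,
              ← mul_assoc, ← pow_add]
            congr 2
            omega)]
        rw [gauss_Ioi (n+2)]
        congr 2
        push_cast
        ring


end auxiliary

theorem stmt3 (n : ℕ) (hn : 1 ≤ n)
    (x : EuclideanSpace ℝ (Fin n)) (hx : x ∈ Metric.sphere (0 : EuclideanSpace ℝ (Fin n)) 1) :
    x ⟨n - 1, by omega⟩ ^ 2 =
      Real.Gamma ((n + 1) / 2) / (2 * Real.pi ^ ((n - 1 : ℝ) / 2)) *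
        ∫ ξ : Metric.sphere (0 : EuclideanSpace ℝ (Fin n)) 1,
          |⟪x, (ξ : EuclideanSpace ℝ (Fin n))⟫| *
            ((n + 1) * (ξ : EuclideanSpace ℝ (Fin n)) ⟨n - 1, by omega⟩ ^ 2 - 1)
          ∂(volume.toSphere) := by

  have hN' : n - 1 < n := by omega
  set N : Fin n := ⟨n - 1, hN'⟩ with hNdef
  suffices h : x N ^ 2 =
      Real.Gamma (((n:ℝ) + 1) / 2) / (2 * Real.pi ^ (((n:ℝ) - 1) / 2)) *
        ∫ ξ : Metric.sphere (0 : EuclideanSpace ℝ (Fin n)) 1,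
          |⟪x, (ξ : EuclideanSpace ℝ (Fin n))⟫| *
            (((n:ℝ) + 1) * (ξ : EuclideanSpace ℝ (Fin n)) N ^ 2 - 1)
          ∂(volume.toSphere) by exact h
  have hxnorm : ‖x‖ = 1 := by rwa [mem_sphere_zero_iff_norm] at hx
  set eN : EuclideanSpace ℝ (Fin n) := EuclideanSpace.single N (1:ℝ) with heN
  -- orthonormal basis with b N = x
  have hcard : Module.finrank ℝ (EuclideanSpace ℝ (Fin n)) = Fintype.card (Fin n) := by
    simp [finrank_euclideanSpace_fin]
  have horto : Orthonormal ℝ (Set.restrict {N} (fun _ : Fin n => x)) := by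
    constructor
    · intro i; exact hxnorm
    · intro i j hij
      exact absurd (Subtype.ext ((Set.mem_singleton_iff.mp i.2).trans
        (Set.mem_singleton_iff.mp j.2).symm)) hij
  obtain ⟨b, hb⟩ := horto.exists_orthonormalBasis_extension_of_card_eq hcard
  have hbN : b N = x := hb N rfl
  set c : EuclideanSpace ℝ (Fin n) := b.repr eN with hcdef
  have hcN : c N = x N := by
    rw [hcdef, OrthonormalBasis.repr_apply_apply, hbN, real_inner_comm, heN,
      EuclideanSpace.inner_single_left]
    simp
  have hcsum : ∑ i, c i ^ 2 = 1 := by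
    have h1 : ‖c‖ = 1 := by
      rw [hcdef, b.repr.norm_map eN, heN, EuclideanSpace.norm_single]
      norm_num
    have h2 : ‖c‖^2 = ∑ i, c i ^ 2 := by
      rw [EuclideanSpace.norm_eq, Real.sq_sqrt (Finset.sum_nonneg fun i _ => sq_nonneg ‖c i‖)]
      exact Finset.sum_congr rfl fun i _ => by rw [Real.norm_eq_abs, sq_abs]
    rw [← h2, h1, one_pow]
  -- set up polar
  set g : Metric.sphere (0 : EuclideanSpace ℝ (Fin n)) 1 → ℝ := fun ξ =>
    |⟪x, (ξ : EuclideanSpace ℝ (Fin n))⟫| *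
      (((n:ℝ) + 1) * (ξ : EuclideanSpace ℝ (Fin n)) N ^ 2 - 1) with hgdef
  set f : EuclideanSpace ℝ (Fin n) → ℝ := fun y =>
    |⟪x, y⟫| * (((n:ℝ)+1) * ⟪eN, y⟫^2 - ‖y‖^2) * Real.exp (-‖y‖^2) with hfdef
  have hinner_eN : ∀ y : EuclideanSpace ℝ (Fin n), ⟪eN, y⟫ = y N := by
    intro y
    rw [heN, EuclideanSpace.inner_single_left]
    simp
  have hfg : ∀ (ξ : Metric.sphere (0 : EuclideanSpace ℝ (Fin n)) 1) (r : ℝ), 0 < r →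
      f (r • (ξ : EuclideanSpace ℝ (Fin n))) = r^3 * Real.exp (-r^2) * g ξ := by
    intro ξ r hr
    have hξ : ‖(ξ : EuclideanSpace ℝ (Fin n))‖ = 1 := mem_sphere_zero_iff_norm.mp ξ.2
    rw [hfdef, hgdef]
    beta_reduce
    rw [real_inner_smul_right, real_inner_smul_right, hinner_eN, norm_smul, hξ, mul_one,
      Real.norm_eq_abs, abs_of_pos hr, abs_mul, abs_of_pos hr]
    ring
  have hpolar := polar hn g f hfg
  -- Gaussian side
  have hchange : ∫ y, f y = ∫ z : EuclideanSpace ℝ (Fin n), f (b.repr.symm z) :=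
    (b.measurePreserving_repr_symm.integral_comp
      b.repr.symm.toHomeomorph.measurableEmbedding f).symm
  have hfrepr : ∀ z : EuclideanSpace ℝ (Fin n), f (b.repr.symm z)
      = |z N| * (((n:ℝ)+1) * (∑ i, c i * z i)^2 - ∑ i, (z i)^2)
          * Real.exp (-∑ i, (z i)^2) := by
    intro z
    have hi1 : ⟪x, b.repr.symm z⟫ = z N := by
      have h := b.repr.inner_map_map x (b.repr.symm z)
      rw [LinearIsometryEquiv.apply_symm_apply] at h
      rw [← h, ← hbN, b.repr_self, EuclideanSpace.inner_single_left]
      simp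
    have hi2 : ⟪eN, b.repr.symm z⟫ = ∑ i, c i * z i := by
      have h := b.repr.inner_map_map eN (b.repr.symm z)
      rw [LinearIsometryEquiv.apply_symm_apply] at h
      rw [← h, ← hcdef, PiLp.inner_apply]
      simp [RCLike.inner_apply, conj_trivial]
      exact Finset.sum_congr rfl fun i _ => mul_comm _ _
    have hi3 : ‖b.repr.symm z‖^2 = ∑ i, (z i)^2 := by
      rw [b.repr.symm.norm_map z, EuclideanSpace.norm_eq,
        Real.sq_sqrt (Finset.sum_nonneg fun i _ => sq_nonneg ‖z i‖)]
      exact Finset.sum_congr rfl fun i _ => by rw [Real.norm_eq_abs, sq_abs]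
    rw [hfdef]
    beta_reduce
    rw [hi1, hi2, hi3]
  rw [integral_congr_ae (Filter.Eventually.of_forall hfrepr)] at hchange
  have hpi := (EuclideanSpace.volume_preserving_symm_measurableEquiv_toLp (Fin n)).integral_comp'
    (fun w : Fin n → ℝ => |w N| * (((n:ℝ)+1) * (∑ i, c i * w i)^2 - ∑ i, (w i)^2)
      * Real.exp (-∑ i, (w i)^2))
  simp only [MeasurableEquiv.coe_toLp_symm] at hpi
  rw [hpi] at hchange
  rw [core N c hcsum, hcN] at hchange
  -- combine
  rw [hchange] at hpolar
  have hGamma3 : Real.Gamma (((n:ℝ)+3)/2) = ((n:ℝ)+1)/2 * Real.Gamma (((n:ℝ)+1)/2) := by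
    rw [show ((n:ℝ)+3)/2 = ((n:ℝ)+1)/2 + 1 by ring, Real.Gamma_add_one (by positivity)]
  have hS : Real.pi ^ (((n:ℝ) - 1) / 2) = Real.sqrt π ^ (n-1) := by
    rw [Real.sqrt_eq_rpow, ← Real.rpow_natCast (π ^ ((1:ℝ)/2)) (n-1),
      ← Real.rpow_mul Real.pi_pos.le]
    congr 1
    rw [Nat.cast_sub hn]
    push_cast
    ring
  have hSpos : (0:ℝ) < Real.sqrt π ^ (n-1) := pow_pos (Real.sqrt_pos.2 Real.pi_pos) _
  have hGpos : (0:ℝ) < Real.Gamma (((n:ℝ)+1)/2) := Real.Gamma_pos_of_pos (by positivity)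
  rw [hGamma3] at hpolar
  rw [hS]
  -- from hpolar : ((n+1) * x N ^2 / 2) * √π^(n-1) = A * ((n+1)/2 * Γ / 2)
  set A := ∫ ξ : Metric.sphere (0 : EuclideanSpace ℝ (Fin n)) 1, g ξ ∂(volume.toSphere) with hA
  have hn1 : (0:ℝ) < (n:ℝ) + 1 := by positivity
  field_simp at hpolar ⊢
  nlinarith [hpolar, mul_pos hSpos hGpos, sq_nonneg (x N)]
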